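/- If ψ ∈ EΨ(a,b) (in particular lim_{p→b⁻} ψ(p) = ∞, where for b = ∞ this means lim_{p→∞} ψ(p) = ∞), then the fundamental function of G(ψ) vanishes at the origin: φ(G(ψ), δ) = sup_{p ∈ (a,b)} δ^{1/p}/ψ(p) → 0 as δ → 0⁺. -/

import Mathlib

noncomputable section

open MeasureTheory Filter Set Topology
open scoped ENNReal NNReal

/-- The set of exponents `p` with `a < p < b` (where `b : ℝ≥0∞` may be `∞`). -/
def expSet (a : ℝ) (b : ℝ≥0∞) : Set ℝ := {p : ℝ | a < p ∧ ENNReal.ofReal p < b}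

/-- The filter of real exponents `p` tending to `b` from below (`p → b⁻`);
when `b = ∞` this amounts to `p → ∞`. -/
def atBbelow (b : ℝ≥0∞) : Filter ℝ :=
  Filter.comap ENNReal.ofReal (nhdsWithin b (Set.Iio b))

/-- The class `EΨ(a,b)`: continuous `ψ` on `(a,b)` with `ψ(p) ≥ 1` and `ψ(b-0) = ∞`. -/
def IsEPsi (a : ℝ) (b : ℝ≥0∞) (ψ : ℝ → ℝ) : Prop :=
  ContinuousOn ψ (expSet a b) ∧ (∀ p ∈ expSet a b, 1 ≤ ψ p) ∧
    Filter.Tendsto ψ (atBbelow b) Filter.atTop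

/-- Norm of the Bilateral Grand Lebesgue space `G(ψ; a, b)` over a measure `μ`:
`‖f‖_{G(ψ)} = sup_{p ∈ (a,b)} ‖f‖_{L^p(μ)} / ψ(p)`, with values in `ℝ≥0∞`. -/
def GNorm {α : Type*} [MeasurableSpace α] (μ : Measure α) (a : ℝ) (b : ℝ≥0∞)
    (ψ : ℝ → ℝ) (f : α → ℝ) : ℝ≥0∞ :=
  ⨆ p ∈ expSet a b, eLpNorm f (ENNReal.ofReal p) μ / ENNReal.ofReal (ψ p)

/-- The class `Ψ(a,b)` (relative to a measure `μ`): positive continuous `ψ` on `(a,b)`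
with `ψ(b-0) = ∞`, admitting a representation `ψ(p) = ‖f‖_{L^p(μ)}` for `p ∈ (a,b)`, where
the measurable `f` lies in `L^p(μ)` for all `p ∈ (a,b)`. -/
def IsPsi {α : Type*} [MeasurableSpace α] (μ : Measure α) (a : ℝ) (b : ℝ≥0∞)
    (ψ : ℝ → ℝ) : Prop :=
  ContinuousOn ψ (expSet a b) ∧ (∀ p ∈ expSet a b, 0 < ψ p) ∧
    Filter.Tendsto ψ (atBbelow b) Filter.atTop ∧
    ∃ f : α → ℝ, AEStronglyMeasurable f μ ∧
      ∀ p ∈ expSet a b, eLpNorm f (ENNReal.ofReal p) μ = ENNReal.ofReal (ψ p)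

/-- The fundamental function `φ(G(ψ;a,b), s) = sup_{p ∈ (a,b)} s^{1/p}/ψ(p)`, real-valued. -/
def fundR (a : ℝ) (b : ℝ≥0∞) (ψ : ℝ → ℝ) (s : ℝ) : ℝ :=
  ⨆ p : expSet a b, s ^ (1 / (p : ℝ)) / ψ p

/-- The fundamental function `φ(G(ψ;a,b), δ) = sup_{p ∈ (a,b)} δ^{1/p}/ψ(p)`, `ℝ≥0∞`-valued. -/
def fundE (a : ℝ) (b : ℝ≥0∞) (ψ : ℝ → ℝ) (δ : ℝ≥0∞) : ℝ≥0∞ :=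
  ⨆ p ∈ expSet a b, δ ^ (1 / p) / ENNReal.ofReal (ψ p)

/-- If `ψ ∈ EΨ(a,b)` (in particular `ψ(p) → ∞` as `p → b⁻`), then the
fundamental function of `G(ψ)` vanishes at the origin:
`φ(G(ψ), δ) = sup_{p ∈ (a,b)} δ^{1/p}/ψ(p) → 0` as `δ → 0⁺`. -/
theorem fundamental_function_vanishes_at_zero
    (a : ℝ) (b : ℝ≥0∞) (ha : 1 ≤ a) (hab : ENNReal.ofReal a < b)
    (ψ : ℝ → ℝ) (hψ : IsEPsi a b ψ) :
    Tendsto (fun δ : ℝ => fundR a b ψ δ) (𝓝[>] (0 : ℝ)) (𝓝 0) := by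
  have ha0 : (0 : ℝ) < a := lt_of_lt_of_le one_pos ha
  rw [Metric.tendsto_nhdsWithin_nhds]
  intro ε hε
  set M : ℝ := 2 / ε with hMdef
  have hM : (0 : ℝ) < M := by positivity
  -- eventually ψ p ≥ M near b from below
  have hev : ∀ᶠ q in 𝓝[<] b, ∀ p : ℝ, ENNReal.ofReal p = q → M ≤ ψ p := by
    rw [← Filter.eventually_comap]
    exact hψ.2.2.eventually (eventually_ge_atTop M)
  obtain ⟨l₀, hl₀, hIoo₀⟩ :=
    (mem_nhdsLT_iff_exists_Ioo_subset' hab).mp hev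
  set l : ℝ≥0∞ := max l₀ (ENNReal.ofReal a) with hldef
  have hlb : l < b := max_lt hl₀ hab
  have hIoo : Ioo l b ⊆ {q | ∀ p : ℝ, ENNReal.ofReal p = q → M ≤ ψ p} :=
    fun q hq => hIoo₀ ⟨lt_of_le_of_lt (le_max_left _ _) hq.1, hq.2⟩
  have hla : ENNReal.ofReal a ≤ l := le_max_right _ _
  have hlt : l ≠ ⊤ := hlb.ne_top
  set C : ℝ := l.toReal with hCdef
  have haC : a ≤ C := by
    have := ENNReal.toReal_mono hlt hla
    rwa [ENNReal.toReal_ofReal ha0.le] at this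
  have hC0 : (0 : ℝ) < C := lt_of_lt_of_le ha0 haC
  have hkey : ∀ p : ℝ, C < p → ENNReal.ofReal p < b → M ≤ ψ p := by
    intro p hCp hpb
    refine hIoo ⟨?_, hpb⟩ p rfl
    have : ENNReal.ofReal C < ENNReal.ofReal p :=
      (ENNReal.ofReal_lt_ofReal_iff (lt_of_le_of_lt hC0.le hCp)).mpr hCp
    rwa [hCdef, ENNReal.ofReal_toReal hlt] at this
  -- a point of expSet
  obtain ⟨m, hlm, hmb⟩ := exists_between hlb
  have hmt : m ≠ ⊤ := hmb.ne_top
  have hp₀ : m.toReal ∈ expSet a b := by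
    constructor
    · have ham : ENNReal.ofReal a < m := lt_of_le_of_lt hla hlm
      exact (ENNReal.ofReal_lt_iff_lt_toReal ha0.le hmt).mp ham
    · rwa [ENNReal.ofReal_toReal hmt]
  haveI : Nonempty (expSet a b) := ⟨⟨m.toReal, hp₀⟩⟩
  -- choose δ₀
  set t : ℝ := min ε 1 / 2 with htdef
  have ht0 : 0 < t := by positivity
  have ht1 : t ≤ 1 := by
    have : min ε 1 ≤ 1 := min_le_right _ _
    simp only [htdef]; linarith
  refine ⟨t ^ C, Real.rpow_pos_of_pos ht0 C, ?_⟩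
  intro δ hδmem hδd
  have hδ0 : 0 < δ := hδmem
  have hδlt : δ < t ^ C := by
    rwa [Real.dist_eq, sub_zero, abs_of_pos hδ0] at hδd
  have hδ1 : δ ≤ 1 := by
    have : t ^ C ≤ 1 := Real.rpow_le_one ht0.le ht1 hC0.le
    linarith
  -- bound each term by ε/2
  have hub : ∀ p : expSet a b, δ ^ (1 / (p : ℝ)) / ψ p ≤ ε / 2 := by
    rintro ⟨p, hpa, hpb⟩
    have hp0 : 0 < p := lt_trans ha0 hpa
    have hψ1 : 1 ≤ ψ p := hψ.2.1 p ⟨hpa, hpb⟩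
    rcases le_or_gt p C with hpC | hCp
    · -- p ≤ C : term ≤ δ^(1/C) < t ≤ ε/2
      have h1 : δ ^ (1 / p) / ψ p ≤ δ ^ (1 / p) :=
        div_le_self (Real.rpow_nonneg hδ0.le _) hψ1
      have h2 : δ ^ (1 / p) ≤ δ ^ (1 / C) :=
        Real.rpow_le_rpow_of_exponent_ge hδ0 hδ1
          (one_div_le_one_div_of_le hp0 hpC)
      have h3 : δ ^ (1 / C) < t := by
        have := Real.rpow_lt_rpow hδ0.le hδlt (one_div_pos.mpr hC0)
        rwa [← Real.rpow_mul ht0.le, mul_one_div, div_self hC0.ne',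
          Real.rpow_one] at this
      have h4 : t ≤ ε / 2 := by
        have : min ε 1 ≤ ε := min_le_left _ _
        simp only [htdef]; linarith
      calc δ ^ (1 / p) / ψ p ≤ δ ^ (1 / p) := h1
        _ ≤ δ ^ (1 / C) := h2
        _ ≤ ε / 2 := le_trans h3.le h4
    · -- C < p : term ≤ 1/M = ε/2
      have hMψ : M ≤ ψ p := hkey p hCp hpb
      have h1 : δ ^ (1 / p) / ψ p ≤ 1 / M := by
        apply div_le_div₀ one_pos.le
          (Real.rpow_le_one hδ0.le hδ1 (by positivity)) hM hMψ
      have h2 : 1 / M = ε / 2 := by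
        rw [hMdef, one_div_div]
      linarith
  have hbdd : BddAbove (Set.range fun p : expSet a b => δ ^ (1 / (p : ℝ)) / ψ p) := by
    refine ⟨ε / 2, ?_⟩
    rintro x ⟨i, rfl⟩
    exact hub i
  have hle : fundR a b ψ δ ≤ ε / 2 := ciSup_le hub
  have hge : 0 ≤ fundR a b ψ δ := by
    have h0 : (0 : ℝ) ≤ δ ^ (1 / (m.toReal : ℝ)) / ψ m.toReal :=
      div_nonneg (Real.rpow_nonneg hδ0.le _)
        (le_trans zero_le_one (hψ.2.1 _ hp₀))
    exact le_trans h0 (le_ciSup hbdd ⟨m.toReal, hp₀⟩)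
  rw [Real.dist_eq, sub_zero, abs_of_nonneg hge]
  linarith
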